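/- For every real number q with q > 0 and q ≠ 1 and all natural numbers s, r, setting N = s + r, the following identity holds: (N+1)_{q^2} · q^{−Ns − 2r + s(s−2)} · [N choose s]_q · Σ_{k=0}^{r} ((q^{−2r};q^2)_k / (q^2;q^2)_k) · q^{2(s+k)} / (s+k+1)_{q^2} = 1. (With N = 2j, s = j+m, r = j−m, this is the scalar content of the orthonormality (Ψ^j_m, Ψ^j_m) = 1 of the monomials Ψ^j_m(x) = q^{−j(j+m)−(j−m)} [2j choose j+m]_q^{1/2} x^{j+m} with respect to the inner product (f,g) = (2j+1)_{q^2} H[f(x)^* e^{−jz^*} e^{−jz} g(x)], after the Haar values H[ζ^m] = q^{2m}/(m+1)_{q^2} have been inserted.) -/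

import Mathlib

/-- The q-shifted factorial `(a;q)_n = ∏_{i=0}^{n-1} (1 - a q^i)`. -/
def qPoch (a q : ℝ) (n : ℕ) : ℝ := ∏ i ∈ Finset.range n, (1 - a * q ^ i)

lemma qPoch_succ (a q : ℝ) (n : ℕ) :
    qPoch a q (n + 1) = qPoch a q n * (1 - a * q ^ n) := Finset.prod_range_succ _ _

lemma qPoch_succ' (a q : ℝ) (n : ℕ) :
    qPoch a q (n + 1) = (1 - a) * qPoch (a * q) q n := by
  unfold qPoch
  rw [Finset.prod_range_succ']
  simp only [pow_zero, mul_one]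
  rw [mul_comm]
  congr 1
  refine Finset.prod_congr rfl fun i _ => ?_
  rw [pow_succ]; ring

section
variable {Q : ℝ} (hQ0 : 0 < Q) (hQ1 : Q ≠ 1)

include hQ0 hQ1 in
lemma zpow_ne_one' {m : ℤ} (hm : m ≠ 0) : Q ^ m ≠ 1 := by
  intro h
  exact hm (zpow_right_injective₀ hQ0 hQ1 (by simpa using h))

include hQ0 hQ1 in
lemma pow_ne_one' {n : ℕ} (hn : n ≠ 0) : Q ^ n ≠ 1 := by
  have := zpow_ne_one' hQ0 hQ1 (m := (n : ℤ)) (by exact_mod_cast hn)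
  rwa [zpow_natCast] at this

include hQ0 hQ1 in
lemma qPochQ_ne_zero (n : ℕ) : qPoch Q Q n ≠ 0 := by
  unfold qPoch
  rw [Finset.prod_ne_zero_iff]
  intro i _
  rw [sub_ne_zero]
  exact fun h => pow_ne_one' hQ0 hQ1 (Nat.succ_ne_zero i) (by rw [pow_succ, mul_comm]; exact h.symm)

end

lemma prod_zpow_sum {Q : ℝ} (hQ : Q ≠ 0) (n : ℕ) (f : ℕ → ℤ) :
    ∏ i ∈ Finset.range n, Q ^ f i = Q ^ (∑ i ∈ Finset.range n, f i) := by
  induction n with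
  | zero => simp
  | succ n ih => rw [Finset.prod_range_succ, Finset.sum_range_succ, ih, zpow_add₀ hQ]

lemma aux_sum (n : ℕ) : (∑ i ∈ Finset.range n, ((i : ℤ) - n)) * 2 = -(n * (n + 1)) := by
  induction n with
  | zero => simp
  | succ n ih =>
    rw [Finset.sum_range_succ]
    have h : ∀ i ∈ Finset.range n, ((i:ℤ) - ((n+1:ℕ):ℤ)) = ((i:ℤ) - n) + (-1) := by
      intro i _; push_cast; ring
    rw [Finset.sum_congr rfl h, Finset.sum_add_distrib, Finset.sum_const, Finset.card_range]
    simp only [nsmul_eq_mul, mul_neg_one]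
    push_cast
    push_cast at ih
    linear_combination ih

lemma qPoch_reflect {Q : ℝ} (hQ0 : 0 < Q) (n : ℕ) :
    qPoch (Q ^ (-(n : ℤ))) Q n
      = (-1) ^ n * Q ^ (∑ i ∈ Finset.range n, ((i : ℤ) - n)) * qPoch Q Q n := by
  have hQ : Q ≠ 0 := ne_of_gt hQ0
  unfold qPoch
  have h1 : ∀ i ∈ Finset.range n, 1 - Q ^ (-(n:ℤ)) * Q ^ i
      = (-1 * Q ^ ((i:ℤ) - n)) * (1 - Q ^ (n - i)) := by
    intro i hi
    rw [Finset.mem_range] at hi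
    have h2 : Q ^ ((i:ℤ) - n) * Q ^ ((n - i : ℕ) : ℤ) = 1 := by
      rw [← zpow_add₀ hQ]
      rw [show ((i:ℤ) - n) + ((n - i : ℕ) : ℤ) = 0 by push_cast [Nat.cast_sub hi.le]; ring]
      exact zpow_zero Q
    have h3 : Q ^ (-(n:ℤ)) * Q ^ i = Q ^ ((i:ℤ) - n) := by
      rw [← zpow_natCast Q i, ← zpow_add₀ hQ]; ring_nf
    rw [h3, ← zpow_natCast Q (n - i)]
    rw [mul_sub, mul_one]
    rw [neg_one_mul, neg_mul, neg_sub_neg]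
    rw [h2]
  rw [Finset.prod_congr rfl h1, Finset.prod_mul_distrib]
  congr 1
  · rw [Finset.prod_mul_distrib, Finset.prod_const, Finset.card_range]
    congr 1
    exact prod_zpow_sum hQ n _
  · rw [← Finset.prod_range_reflect]
    refine Finset.prod_congr rfl fun j hj => ?_
    rw [Finset.mem_range] at hj
    rw [← pow_succ']
    congr 2
    omega

lemma key {Q : ℝ} (hQ0 : 0 < Q) (hQ1 : Q ≠ 1) :
    ∀ (r : ℕ) (u : ℝ), (∀ i : ℕ, i ≤ r → u * Q ^ i ≠ 1) →
    ∑ k ∈ Finset.range (r+1),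
        qPoch (Q ^ (-(r:ℤ))) Q k * Q ^ k / (qPoch Q Q k * (1 - u * Q ^ k))
      = u ^ r * qPoch Q Q r / ∏ i ∈ Finset.range (r+1), (1 - u * Q ^ i) := by
  have hQ : Q ≠ 0 := ne_of_gt hQ0
  have hP : ∀ n, qPoch Q Q n ≠ 0 := qPochQ_ne_zero hQ0 hQ1
  intro r
  induction r with
  | zero =>
    intro u hu
    simp [qPoch]
  | succ r ih =>
    intro u hu
    push_cast
    set b := Q ^ (-((r:ℤ)+1)) with hbdef
    have hab : Q ^ (r+1) * b = 1 := by
      rw [hbdef, ← zpow_natCast Q (r+1), ← zpow_add₀ hQ]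
      rw [show ((r+1:ℕ):ℤ) + (-((r:ℤ)+1)) = 0 by push_cast; ring]
      exact zpow_zero Q
    have hbQ : b * Q = Q ^ (-(r:ℤ)) := by
      rw [hbdef, show (-(r:ℤ)) = (-((r:ℤ)+1)) + 1 by ring, zpow_add₀ hQ, zpow_one]
    have haQ : ∀ k : ℕ, Q ^ (r+1) * (b * Q ^ k) = Q ^ k := by
      intro k; rw [← mul_assoc, hab, one_mul]
    have hF1 : ∀ k : ℕ, qPoch b Q k * (Q ^ (r+1) - Q ^ k)
        = qPoch (Q ^ (-(r:ℤ))) Q k * (Q ^ (r+1) - 1) := by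
      intro k
      have h12 : qPoch b Q k * (1 - b * Q ^ k)
          = (1 - b) * qPoch (Q ^ (-(r:ℤ))) Q k := by
        rw [← qPoch_succ, qPoch_succ', hbQ]
      linear_combination (Q ^ (r+1)) * h12 +
        (qPoch b Q k * Q ^ k - qPoch (Q ^ (-(r:ℤ))) Q k) * hab
    have hD : ∀ k : ℕ, k ≤ r + 1 → 1 - u * Q ^ k ≠ 0 := by
      intro k hk h
      exact hu k hk (by linarith)
    have hane : ∀ k : ℕ, k ≤ r → Q ^ k - Q ^ (r+1) ≠ 0 := by
      intro k hk h
      rw [sub_eq_zero, ← zpow_natCast Q k, ← zpow_natCast Q (r+1)] at h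
      have := zpow_right_injective₀ hQ0 hQ1 h
      omega
    have hu0 : ∀ i : ℕ, i ≤ r → b * Q ^ i ≠ 1 := by
      intro i hi h
      have hne := zpow_ne_one' hQ0 hQ1 (m := -((r:ℤ)+1)+i) (by omega)
      apply hne
      rw [zpow_add₀ hQ, zpow_natCast, ← hbdef]
      exact h
    have ihu := ih u (fun i hi => hu i (by omega))
    have ihb := ih b hu0
    have hW : qPoch b Q (r+1)
        = (-1)^(r+1) * Q ^ (∑ i ∈ Finset.range (r+1), ((i:ℤ) - ((r+1:ℕ):ℤ))) * qPoch Q Q (r+1) := by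
      rw [hbdef, show (-((r:ℤ)+1)) = (-(((r+1):ℕ):ℤ)) by push_cast; ring]
      exact qPoch_reflect hQ0 (r+1)
    have hE2 := aux_sum (r+1)
    set c := Q ^ (∑ i ∈ Finset.range (r+1), ((i:ℤ) - ((r+1:ℕ):ℤ))) with hcdef
    have hCsq : c * c * Q ^ ((r+1)*(r+2)) = 1 := by
      rw [hcdef, ← zpow_add₀ hQ, ← zpow_natCast Q ((r+1)*(r+2)), ← zpow_add₀ hQ]
      rw [show (∑ i ∈ Finset.range (r+1), ((i:ℤ) - ((r+1:ℕ):ℤ)))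
          + (∑ i ∈ Finset.range (r+1), ((i:ℤ) - ((r+1:ℕ):ℤ))) + (((r+1)*(r+2):ℕ):ℤ) = 0 by
        push_cast at hE2 ⊢; linear_combination hE2]
      exact zpow_zero Q
    have hbr : b ^ r * Q ^ (r*(r+1)) = 1 := by
      rw [hbdef, ← zpow_natCast (Q ^ (-((r:ℤ)+1))) r, ← zpow_mul, ← zpow_natCast Q (r*(r+1)),
        ← zpow_add₀ hQ]
      rw [show (-((r:ℤ)+1)) * r + ((r*(r+1):ℕ):ℤ) = 0 by push_cast; ring]
      exact zpow_zero Q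
    have hcne : c ≠ 0 := by rw [hcdef]; exact zpow_ne_zero _ hQ
    have hF2 : ∑ k ∈ Finset.range (r+1),
        qPoch (Q ^ (-(r:ℤ))) Q k * Q ^ k * (1 - Q ^ (r+1)) / (qPoch Q Q k * (Q ^ k - Q ^ (r+1)))
        = -(qPoch b Q (r+1) * Q ^ (r+1) / qPoch Q Q (r+1)) := by
      have hterm : ∀ k ∈ Finset.range (r+1),
          qPoch (Q ^ (-(r:ℤ))) Q k * Q ^ k * (1 - Q ^ (r+1)) / (qPoch Q Q k * (Q ^ k - Q ^ (r+1)))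
          = qPoch (Q ^ (-(r:ℤ))) Q k * Q ^ k / (qPoch Q Q k * (1 - b * Q ^ k))
              * ((Q ^ (r+1) - 1) / Q ^ (r+1)) := by
        intro k hk
        rw [Finset.mem_range] at hk
        have hD' : 1 - b * Q ^ k ≠ 0 :=
          sub_ne_zero.mpr (fun h => hu0 k (by omega) h.symm)
        have hsub : Q ^ k - Q ^ (r+1) = -(Q ^ (r+1)) * (1 - b * Q ^ k) := by
          linear_combination -haQ k
        rw [hsub]
        have ha0 : (Q : ℝ) ^ (r+1) ≠ 0 := pow_ne_zero _ hQ
        rw [div_mul_div_comm, div_eq_div_iff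
          (mul_ne_zero (hP k) (mul_ne_zero (neg_ne_zero.mpr ha0) hD'))
          (mul_ne_zero (mul_ne_zero (hP k) hD') ha0)]
        ring
      rw [Finset.sum_congr rfl hterm, ← Finset.sum_mul, ihb]
      have hprodb : ∏ i ∈ Finset.range (r+1), (1 - b * Q ^ i) = qPoch b Q (r+1) := rfl
      rw [hprodb, hW]
      have hPsucc : qPoch Q Q (r+1) = qPoch Q Q r * (1 - Q * Q ^ r) := qPoch_succ Q Q r
      have ha0 : (Q : ℝ) ^ (r+1) ≠ 0 := pow_ne_zero _ hQ
      have ht : ((-1:ℝ))^(r+1) * ((-1:ℝ))^(r+1) = 1 := by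
        rw [← pow_add, ← two_mul, pow_mul]; norm_num
      set t := ((-1:ℝ))^(r+1) with htdef
      set Pr := qPoch Q Q r
      set Pr1 := qPoch Q Q (r+1)
      have hPr : Pr ≠ 0 := hP r
      have hPr1 : Pr1 ≠ 0 := hP (r+1)
      rw [hPsucc] at hPr1 ⊢
      have h1Q : 1 - Q * Q ^ r ≠ 0 := fun h => hPr1 (by rw [h, mul_zero])
      have htne : t ≠ 0 := by rw [htdef]; positivity
      field_simp
      have ht' : ((-1:ℝ))^(r+1) * ((-1:ℝ))^(r+1) = 1 := ht
      linear_combination (1-Q*Q^r) *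
        (c*c*Q^(2*r+2) * ht' - c*c*Q^(2*r+2) * hbr + b^r * hCsq)
    rw [Finset.sum_range_succ]
    have hT : ∀ k ∈ Finset.range (r+1),
        qPoch b Q k * Q ^ k / (qPoch Q Q k * (1 - u * Q ^ k))
        = qPoch (Q ^ (-(r:ℤ))) Q k * Q ^ k / (qPoch Q Q k * (1 - u * Q ^ k))
            * (u * (1 - Q ^ (r+1)) / (1 - u * Q ^ (r+1)))
          + qPoch (Q ^ (-(r:ℤ))) Q k * Q ^ k * (1 - Q ^ (r+1))
              / (qPoch Q Q k * (Q ^ k - Q ^ (r+1))) * (1 / (1 - u * Q ^ (r+1))) := by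
      intro k hk
      rw [Finset.mem_range] at hk
      have hNk : qPoch b Q k
          = qPoch (Q ^ (-(r:ℤ))) Q k * (1 - Q ^ (r+1)) / (Q ^ k - Q ^ (r+1)) := by
        rw [eq_div_iff (hane k (by omega))]
        linear_combination -hF1 k
      have h1 := hane k (by omega)
      have h2 := hD k (by omega)
      have h3 := hD (r+1) le_rfl
      rw [hNk, div_mul_eq_mul_div, div_div, div_mul_div_comm, div_mul_div_comm,
        div_add_div _ _ (mul_ne_zero (mul_ne_zero (hP k) h2) h3)
          (mul_ne_zero (mul_ne_zero (hP k) h1) h3),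
        div_eq_div_iff (mul_ne_zero h1 (mul_ne_zero (hP k) h2))
          (mul_ne_zero (mul_ne_zero (mul_ne_zero (hP k) h2) h3)
            (mul_ne_zero (mul_ne_zero (hP k) h1) h3))]
      ring
    rw [Finset.sum_congr rfl hT, Finset.sum_add_distrib, ← Finset.sum_mul, ← Finset.sum_mul,
      ihu, hF2]
    rw [mul_one_div, neg_div, div_div]
    rw [add_assoc, neg_add_cancel, add_zero]
    rw [Finset.prod_range_succ (fun i => 1 - u * Q ^ i) (r+1)]
    rw [div_mul_div_comm, qPoch_succ Q Q r]
    congr 1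
    ring

lemma choose2_add (s r : ℕ) : (s + r).choose 2 = s.choose 2 + r.choose 2 + s * r := by
  induction r with
  | zero => simp
  | succ r ih =>
    have h1 : (s + (r+1)) = (s + r) + 1 := by omega
    rw [h1, Nat.choose_succ_succ (s+r) 1, Nat.choose_one_right, ih,
      Nat.choose_succ_succ r 1, Nat.choose_one_right]
    ring

/-- The q-number `(n)_q = (1 - q^n)/(1 - q)`. -/
noncomputable def qNum (q : ℝ) (n : ℕ) : ℝ := (1 - q ^ n) / (1 - q)

/-- The symmetric q-integer `[m]_q = (q^m − q^{−m})/(q − q^{−1})`. -/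
noncomputable def qIntSym (q : ℝ) (m : ℕ) : ℝ := (q ^ (m : ℤ) - q ^ (-(m : ℤ))) / (q - q⁻¹)

/-- The symmetric q-factorial `[n]_q! = ∏_{i=1}^{n} [i]_q`. -/
noncomputable def qFactSym (q : ℝ) (n : ℕ) : ℝ := ∏ i ∈ Finset.range n, qIntSym q (i + 1)

/-- The q-binomial coefficient `[N choose s]_q = [N]_q!/([s]_q! [N−s]_q!)`. -/
noncomputable def qBinomSym (q : ℝ) (N s : ℕ) : ℝ :=
  qFactSym q N / (qFactSym q s * qFactSym q (N - s))

section main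
variable {q : ℝ} (hq : 0 < q) (hq1 : q ≠ 1)

include hq hq1

lemma hQ2_ne_one : (q^2 : ℝ) ≠ 1 := pow_ne_one' hq hq1 two_ne_zero

lemma qIntSym_eq (m : ℕ) : qIntSym q (m + 1) * q ^ m = qNum (q^2) (m + 1) := by
  have hq0 : q ≠ 0 := ne_of_gt hq
  have h2 : (1 : ℝ) - q^2 ≠ 0 := fun h => hQ2_ne_one hq hq1 (by linarith)
  have hqi : q - q⁻¹ ≠ 0 := by
    rw [sub_ne_zero]
    intro h
    apply h2
    field_simp at h
    linarith
  unfold qIntSym qNum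
  rw [show (-((m+1 : ℕ) : ℤ)) = -(((m+1 : ℕ)) : ℤ) from rfl]
  rw [zpow_neg, zpow_natCast]
  rw [div_mul_eq_mul_div, div_eq_div_iff hqi h2]
  have hpne : (q : ℝ) ^ (m+1) ≠ 0 := pow_ne_zero _ hq0
  field_simp
  ring

lemma qFactSym_eq (n : ℕ) :
    qFactSym q n * q ^ (n.choose 2) = ∏ i ∈ Finset.range n, qNum (q^2) (i + 1) := by
  induction n with
  | zero => simp [qFactSym]
  | succ n ih =>
    have hc : (n+1).choose 2 = n.choose 2 + n := by
      rw [Nat.choose_succ_succ n 1, Nat.choose_one_right]; ring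
    rw [show qFactSym q (n+1) = qFactSym q n * qIntSym q (n+1) from Finset.prod_range_succ _ _,
      hc, pow_add, Finset.prod_range_succ, ← ih, ← qIntSym_eq hq hq1 n]
    ring

lemma qNumProd_eq (n : ℕ) :
    (∏ i ∈ Finset.range n, qNum (q^2) (i + 1)) * (1 - q^2) ^ n = qPoch (q^2) (q^2) n := by
  have h2 : (1 : ℝ) - q^2 ≠ 0 := fun h => hQ2_ne_one hq hq1 (by linarith)
  induction n with
  | zero => simp [qPoch]
  | succ n ih =>
    rw [Finset.prod_range_succ, qPoch_succ, pow_succ (1 - q^2) n, ← ih]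
    have : qNum (q^2) (n+1) * (1 - q^2) = 1 - (q^2) * (q^2)^n := by
      rw [qNum, div_mul_cancel₀ _ h2, ← pow_succ']
    linear_combination ((∏ i ∈ Finset.range n, qNum (q^2) (i + 1)) * (1 - q^2)^n) * this

lemma qFactSym_eq' (n : ℕ) :
    qFactSym q n = qPoch (q^2) (q^2) n / ((1 - q^2) ^ n * q ^ (n.choose 2)) := by
  have hq0 : q ≠ 0 := ne_of_gt hq
  have h2 : (1 : ℝ) - q^2 ≠ 0 := fun h => hQ2_ne_one hq hq1 (by linarith)
  rw [eq_div_iff (mul_ne_zero (pow_ne_zero _ h2) (pow_ne_zero _ hq0))]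
  linear_combination (1-q^2)^n * (qFactSym_eq hq hq1 n) + (qNumProd_eq hq hq1 n)

end main

/-- with `N = s + r` (`N = 2j`, `s = j+m`, `r = j−m`), the scalar content of
the orthonormality `(Ψ^j_m, Ψ^j_m) = 1`:
`(N+1)_{q²} · q^{−Ns−2r+s(s−2)} · [N choose s]_q ·
 Σ_{k=0}^{r} ((q^{−2r};q²)_k/(q²;q²)_k) q^{2(s+k)}/(s+k+1)_{q²} = 1`. -/
theorem orthonormality_scalar (q : ℝ) (hq : 0 < q) (hq1 : q ≠ 1) (s r : ℕ) :
    qNum (q ^ 2) (s + r + 1) *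
        q ^ (-((s : ℤ) + (r : ℤ)) * (s : ℤ) - 2 * (r : ℤ) + (s : ℤ) * ((s : ℤ) - 2)) *
        qBinomSym q (s + r) s *
        ∑ k ∈ Finset.range (r + 1),
          (qPoch (q ^ (-2 * (r : ℤ))) (q ^ 2) k / qPoch (q ^ 2) (q ^ 2) k) *
            q ^ (2 * (s + k)) / qNum (q ^ 2) (s + k + 1)
      = 1 := by
  have hq0 : q ≠ 0 := ne_of_gt hq
  have hQ0 : (0:ℝ) < q^2 := by positivity
  have hQ1 : (q^2:ℝ) ≠ 1 := hQ2_ne_one hq hq1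
  have hP : ∀ n, qPoch (q^2) (q^2) n ≠ 0 := qPochQ_ne_zero hQ0 hQ1
  have h2 : (1:ℝ) - q^2 ≠ 0 := fun h => hQ1 (by linarith)
  have harg : q ^ (-2 * (r:ℤ)) = (q^2 : ℝ) ^ (-(r:ℤ)) := by
    rw [← zpow_natCast q 2, ← zpow_mul]
    norm_num
  have hu : ∀ i : ℕ, i ≤ r → (q^2)^(s+1) * (q^2)^i ≠ 1 := by
    intro i hi h
    rw [← pow_add] at h
    exact pow_ne_one' hQ0 hQ1 (by omega) h
  have hD : ∀ m : ℕ, (1:ℝ) - (q^2)^(m+1) ≠ 0 :=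
    fun m => sub_ne_zero.mpr (fun h => pow_ne_one' hQ0 hQ1 (Nat.succ_ne_zero m) h.symm)
  have hterm : ∀ k ∈ Finset.range (r+1),
      qPoch (q ^ (-2 * (r:ℤ))) (q^2) k / qPoch (q^2) (q^2) k * q ^ (2*(s+k)) / qNum (q^2) (s+k+1)
      = qPoch ((q^2) ^ (-(r:ℤ))) (q^2) k * (q^2)^k
          / (qPoch (q^2) (q^2) k * (1 - (q^2)^(s+1) * (q^2)^k)) * ((1 - q^2) * (q^2)^s) := by
    intro k hk
    rw [harg, pow_mul q 2 (s+k), qNum]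
    have e1 : (q^2:ℝ)^(s+1) * (q^2)^k = (q^2)^(s+k+1) := by rw [← pow_add]; congr 1; omega
    rw [e1]
    have d1 := hD (s+k)
    field_simp
    ring
  rw [Finset.sum_congr rfl hterm, ← Finset.sum_mul, key hQ0 hQ1 r ((q^2)^(s+1)) hu]
  have hprod : (∏ i ∈ Finset.range (r+1), (1 - (q^2)^(s+1) * (q^2)^i))
      = qPoch (q^2) (q^2) (s+r+1) / qPoch (q^2) (q^2) s := by
    rw [eq_div_iff (hP s)]
    have h' : qPoch (q^2) (q^2) (s+(r+1))
        = qPoch (q^2) (q^2) s * ∏ i ∈ Finset.range (r+1), (1 - (q^2) * (q^2)^(s+i)) := by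
      unfold qPoch; rw [Finset.prod_range_add]
    rw [show s+r+1 = s+(r+1) from rfl, h', mul_comm]
    congr 1
    refine Finset.prod_congr rfl fun i _ => ?_
    rw [← pow_add, ← pow_succ']
    congr 2
    omega
  rw [hprod]
  rw [qBinomSym, show s + r - s = r by omega, qFactSym_eq' hq hq1 (s+r),
    qFactSym_eq' hq hq1 s, qFactSym_eq' hq hq1 r]
  rw [qNum]
  have hE : q ^ (-((s:ℤ)+(r:ℤ))*(s:ℤ) - 2*(r:ℤ) + (s:ℤ)*((s:ℤ)-2))
      = q^(s*r) / q^(2*((s+1)*r + s)) := by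
    rw [eq_div_iff (pow_ne_zero _ hq0), ← zpow_natCast q (2*((s+1)*r+s)), ← zpow_add₀ hq0,
      ← zpow_natCast q (s*r)]
    congr 1
    push_cast
    ring
  rw [hE, choose2_add s r]
  rw [show qPoch (q^2) (q^2) (s+r+1) = qPoch (q^2) (q^2) (s+r) * (1 - q^2 * (q^2)^(s+r)) from
    qPoch_succ _ _ _]
  have d2 := hD (s+r)
  have hD2 : (1:ℝ) - q^2 * (q^2)^(s+r) ≠ 0 := by
    rw [← pow_succ']; exact hD (s+r)
  have hT3 : qPoch (q^2) (q^2) (s+r) / ((1 - q^2)^(s+r) * q^(s.choose 2 + r.choose 2 + s*r)) /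
        (qPoch (q^2) (q^2) s / ((1 - q^2)^s * q^(s.choose 2)) *
          (qPoch (q^2) (q^2) r / ((1 - q^2)^r * q^(r.choose 2))))
      = qPoch (q^2) (q^2) (s+r) * ((1 - q^2)^s * q^(s.choose 2)) * ((1 - q^2)^r * q^(r.choose 2)) /
        (((1 - q^2)^(s+r) * q^(s.choose 2 + r.choose 2 + s*r)) *
          (qPoch (q^2) (q^2) s * qPoch (q^2) (q^2) r)) := by
    rw [div_mul_div_comm, div_div_div_comm, div_div_eq_mul_div, div_mul_eq_mul_div, div_div]
    ring
  have hT4 : ((q^2)^(s+1))^r * qPoch (q^2) (q^2) r /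
        (qPoch (q^2) (q^2) (s+r) * (1 - q^2 * (q^2)^(s+r)) / qPoch (q^2) (q^2) s) *
        ((1 - q^2) * (q^2)^s)
      = ((q^2)^(s+1))^r * qPoch (q^2) (q^2) r * qPoch (q^2) (q^2) s * ((1 - q^2) * (q^2)^s) /
        (qPoch (q^2) (q^2) (s+r) * (1 - q^2 * (q^2)^(s+r))) := by
    rw [div_div_eq_mul_div, div_mul_eq_mul_div]
  rw [hT3, hT4, div_mul_div_comm, div_mul_div_comm, div_mul_div_comm]
  rw [div_eq_one_iff_eq]
  · ring
  · refine mul_ne_zero (mul_ne_zero (mul_ne_zero h2 (pow_ne_zero _ hq0)) ?_) ?_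
    · exact mul_ne_zero (mul_ne_zero (pow_ne_zero _ h2) (pow_ne_zero _ hq0))
        (mul_ne_zero (hP s) (hP r))
    · exact mul_ne_zero (hP (s+r)) hD2
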